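/- Let $H$ be a real inner product space, $L : H \to H$ linear, and $u, u_h : [0,\infty) \to H$ differentiable with $u'(t) = L u(t)$ and $u_h'(t) = L_h u_h(t)$, where $L_h : V_h \to V_h$ is linear on a subspace $V_h \subseteq H$ and satisfies $\langle L_h v, v \rangle \le \mu \|v\|^2$ for all $v \in V_h$. Suppose there is a linear map $\Pi$ into $V_h$ and constants $E_T, E_S \ge 0$ with $\|(I - \Pi) L u(t)\| \le E_T$ and $|\langle (L - L_h \Pi) u(t), v \rangle| \le E_S \|v\|$ for all $v \in V_h$ and all $t$. Then with $\xi(t) = \Pi u(t) - u_h(t)$, one has $\frac{d}{dt} \|\xi(t)\| \le \mu \|\xi(t)\| + E_T + E_S$ wherever $\xi(t) \ne 0$, and consequently $\|\xi(t)\| \le e^{\mu t} \|\xi(0)\| + \sigma(\mu, t)(E_T + E_S)$ where $\sigma(\mu,t) = (e^{\mu t} - 1)/\mu$ for $\mu > 0$ and $\sigma(0,t) = t$. -/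

import Mathlib

open scoped RealInnerProductSpace

/-- `σ(a,t) = (e^{at}-1)/a` for `a > 0`, and `σ(0,t) = t`. -/
noncomputable def sigma (a t : ℝ) : ℝ := if 0 < a then (Real.exp (a * t) - 1) / a else t

lemma hasDerivAt_norm_aux {F : Type*} [NormedAddCommGroup F] [InnerProductSpace ℝ F]
    {f : ℝ → F} {f' : F} {x : ℝ} (hf : HasDerivAt f f' x) (h0 : f x ≠ 0) :
    HasDerivAt (fun t => ‖f t‖) (⟪f x, f'⟫ / ‖f x‖) x := by
  have h1 : HasDerivAt (fun t => ‖f t‖ ^ 2) (2 * ⟪f x, f'⟫) x := hf.norm_sq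
  have hne : (‖f x‖ : ℝ) ^ 2 ≠ 0 := pow_ne_zero _ (norm_ne_zero_iff.mpr h0)
  have hs := (Real.hasDerivAt_sqrt hne).comp x h1
  have heq : (Real.sqrt ∘ fun t => ‖f t‖ ^ 2) = fun t => ‖f t‖ := by
    funext t; simp [Real.sqrt_sq (norm_nonneg _)]
  rw [heq] at hs
  have e : 1 / (2 * √(‖f x‖ ^ 2)) * (2 * ⟪f x, f'⟫) = ⟪f x, f'⟫ / ‖f x‖ := by
    rw [Real.sqrt_sq (norm_nonneg _)]
    have : ‖f x‖ ≠ 0 := norm_ne_zero_iff.mpr h0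
    field_simp
  rw [e] at hs
  exact hs

/-- Error estimate for the semidiscrete scheme `∂ₜ u_h = L_h u_h` approximating
`∂ₜ u = L u`, with `ξ(t) = Π u(t) - u_h(t)`. -/
theorem semidiscrete_error_estimate {H : Type*} [NormedAddCommGroup H]
    [InnerProductSpace ℝ H]
    (Vh : Submodule ℝ H) (L Lh P : H →L[ℝ] H) (μ ET ES : ℝ)
    (hμ : 0 ≤ μ) (hET : 0 ≤ ET) (hES : 0 ≤ ES)
    (hP : ∀ w : H, P w ∈ Vh)
    (hLhV : ∀ v ∈ Vh, Lh v ∈ Vh)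
    (hsb : ∀ v ∈ Vh, ⟪Lh v, v⟫ ≤ μ * ‖v‖ ^ 2)
    (u uh : ℝ → H)
    (hu : ∀ t ≥ (0:ℝ), HasDerivAt u (L (u t)) t)
    (huh : ∀ t ≥ (0:ℝ), HasDerivAt uh (Lh (uh t)) t)
    (huhV : ∀ t ≥ (0:ℝ), uh t ∈ Vh)
    (hT : ∀ t ≥ (0:ℝ), ‖L (u t) - P (L (u t))‖ ≤ ET)
    (hS : ∀ t ≥ (0:ℝ), ∀ v ∈ Vh, |⟪L (u t) - Lh (P (u t)), v⟫| ≤ ES * ‖v‖) :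
    (∀ t ≥ (0:ℝ), P (u t) - uh t ≠ 0 →
        deriv (fun s => ‖P (u s) - uh s‖) t ≤ μ * ‖P (u t) - uh t‖ + ET + ES) ∧
    (∀ t ≥ (0:ℝ), ‖P (u t) - uh t‖ ≤
        Real.exp (μ * t) * ‖P (u 0) - uh 0‖ + sigma μ t * (ET + ES)) := by
  classical
  set ξ : ℝ → H := fun t => P (u t) - uh t with hξdef
  set ξd : ℝ → H := fun t => P (L (u t)) - Lh (uh t) with hξddef
  -- derivative of ξ
  have hderiv : ∀ t ≥ (0:ℝ), HasDerivAt ξ (ξd t) t := by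
    intro t ht
    exact (P.hasFDerivAt.comp_hasDerivAt t (hu t ht)).sub (huh t ht)
  have hξmem : ∀ t ≥ (0:ℝ), ξ t ∈ Vh := fun t ht => Vh.sub_mem (hP _) (huhV t ht)
  have hξdmem : ∀ t ≥ (0:ℝ), ξd t ∈ Vh := fun t ht =>
    Vh.sub_mem (hP _) (hLhV _ (huhV t ht))
  -- key estimate
  have key : ∀ t ≥ (0:ℝ), ∀ v ∈ Vh, ⟪ξd t - Lh (ξ t), v⟫ ≤ (ET + ES) * ‖v‖ := by
    intro t ht v hv
    have hrw : ξd t - Lh (ξ t)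
        = (P (L (u t)) - L (u t)) + (L (u t) - Lh (P (u t))) := by
      simp only [hξdef, hξddef, map_sub]
      abel
    rw [hrw, inner_add_left]
    have h1 : ⟪P (L (u t)) - L (u t), v⟫ ≤ ET * ‖v‖ := by
      calc ⟪P (L (u t)) - L (u t), v⟫ ≤ ‖P (L (u t)) - L (u t)‖ * ‖v‖ :=
            real_inner_le_norm _ _
        _ ≤ ET * ‖v‖ := by
            have := hT t ht
            rw [norm_sub_rev] at this
            exact mul_le_mul_of_nonneg_right this (norm_nonneg _)
    have h2 : ⟪L (u t) - Lh (P (u t)), v⟫ ≤ ES * ‖v‖ :=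
      (le_abs_self _).trans (hS t ht v hv)
    linarith
  -- quadratic estimate
  have quad : ∀ t ≥ (0:ℝ), ⟪ξ t, ξd t⟫ ≤ μ * ‖ξ t‖ ^ 2 + (ET + ES) * ‖ξ t‖ := by
    intro t ht
    have h1 : ⟪ξd t - Lh (ξ t), ξ t⟫ ≤ (ET + ES) * ‖ξ t‖ := key t ht _ (hξmem t ht)
    have h2 : ⟪Lh (ξ t), ξ t⟫ ≤ μ * ‖ξ t‖ ^ 2 := hsb _ (hξmem t ht)
    have h3 : ⟪ξd t - Lh (ξ t), ξ t⟫ = ⟪ξd t, ξ t⟫ - ⟪Lh (ξ t), ξ t⟫ :=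
      inner_sub_left _ _ _
    have h4 : ⟪ξ t, ξd t⟫ = ⟪ξd t, ξ t⟫ := real_inner_comm _ _
    linarith
  -- at points where ξ = 0, the derivative is small
  have dzero : ∀ t ≥ (0:ℝ), ξ t = 0 → ‖ξd t‖ ≤ ET + ES := by
    intro t ht h0
    have h1 : ⟪ξd t - Lh (ξ t), ξd t⟫ ≤ (ET + ES) * ‖ξd t‖ := key t ht _ (hξdmem t ht)
    rw [h0, map_zero, sub_zero, real_inner_self_eq_norm_sq] at h1
    rcases eq_or_lt_of_le (norm_nonneg (ξd t)) with h | h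
    · rw [← h]; positivity
    · nlinarith
  -- the differential inequality value
  have dval : ∀ t ≥ (0:ℝ), ξ t ≠ 0 →
      ⟪ξ t, ξd t⟫ / ‖ξ t‖ ≤ μ * ‖ξ t‖ + ET + ES := by
    intro t ht h0
    have hpos : (0:ℝ) < ‖ξ t‖ := norm_pos_iff.mpr h0
    rw [div_le_iff₀ hpos]
    have := quad t ht
    nlinarith
  constructor
  · intro t ht h0
    have hd := hasDerivAt_norm_aux (hderiv t ht) h0
    rw [hd.deriv]
    exact dval t ht h0
  · intro t ht
    -- Grönwall
    set g : ℝ → ℝ := fun s => if ξ s = 0 then ET + ES else ⟪ξ s, ξd s⟫ / ‖ξ s‖ with hgdef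
    have main := le_gronwallBound_of_liminf_deriv_right_le
      (f := fun s => ‖ξ s‖) (f' := g) (δ := ‖ξ 0‖) (K := μ) (ε := ET + ES)
      (a := 0) (b := t)
      (by -- continuity
        intro s hs
        exact ((hderiv s hs.1).continuousAt.norm).continuousWithinAt)
      (by -- liminf slope condition
        intro x hx r hr
        by_cases h0 : ξ x = 0
        · -- slope tends to ‖ξd x‖ ≤ ET + ES = g x < r
          have hgx : g x = ET + ES := by simp [hgdef, h0]
          have hslope : Filter.Tendsto (slope ξ x) (nhdsWithin x (Set.Ioi x))
              (nhds (ξd x)) := by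
            have := (hderiv x hx.1).hasDerivWithinAt (s := Set.Ioi x)
            rw [hasDerivWithinAt_iff_tendsto_slope] at this
            rwa [Set.diff_singleton_eq_self (Set.notMem_Ioi.mpr le_rfl)] at this
          have hnorm : Filter.Tendsto (fun z => ‖slope ξ x z‖)
              (nhdsWithin x (Set.Ioi x)) (nhds ‖ξd x‖) :=
            (continuous_norm.tendsto _).comp hslope
          have heq : ∀ z ∈ Set.Ioi x,
              ‖slope ξ x z‖ = (z - x)⁻¹ * (‖ξ z‖ - ‖ξ x‖) := by
            intro z hz
            have hzx : (0:ℝ) < z - x := sub_pos.mpr hz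
            rw [h0, norm_zero, sub_zero, slope_def_module, h0, sub_zero,
              norm_smul, Real.norm_eq_abs, abs_inv, abs_of_pos hzx]
          have hnorm' : Filter.Tendsto (fun z => (z - x)⁻¹ * (‖ξ z‖ - ‖ξ x‖))
              (nhdsWithin x (Set.Ioi x)) (nhds ‖ξd x‖) := by
            refine hnorm.congr' ?_
            filter_upwards [self_mem_nhdsWithin] with z hz using heq z hz
          have hlt : ‖ξd x‖ < r := lt_of_le_of_lt (dzero x hx.1 h0) (hgx ▸ hr)
          exact ((hnorm'.eventually (Filter.Tendsto.eventually_lt_const hlt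
            Filter.tendsto_id)).frequently)
        · have hgx : g x = ⟪ξ x, ξd x⟫ / ‖ξ x‖ := by simp [hgdef, h0]
          have hd := hasDerivAt_norm_aux (hderiv x hx.1) h0
          have hdw := hd.hasDerivWithinAt (s := Set.Ioi x)
          rw [hasDerivWithinAt_iff_tendsto_slope,
            Set.diff_singleton_eq_self (Set.notMem_Ioi.mpr le_rfl)] at hdw
          have hdw' : Filter.Tendsto (fun z => (z - x)⁻¹ * (‖ξ z‖ - ‖ξ x‖))
              (nhdsWithin x (Set.Ioi x)) (nhds (⟪ξ x, ξd x⟫ / ‖ξ x‖)) := by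
            refine hdw.congr' ?_
            filter_upwards [self_mem_nhdsWithin] with z _
            rw [slope_def_field]
            ring
          have hlt : ⟪ξ x, ξd x⟫ / ‖ξ x‖ < r := hgx ▸ hr
          exact ((hdw'.eventually (Filter.Tendsto.eventually_lt_const hlt
            Filter.tendsto_id)).frequently))
      le_rfl
      (by -- bound
        intro x hx
        by_cases h0 : ξ x = 0
        · simp only [hgdef, h0, if_pos]
          simp [norm_zero]
        · simp only [hgdef, if_neg h0]
          have := dval x hx.1 h0
          linarith)
    have hres := main t ⟨ht, le_rfl⟩
    rw [sub_zero] at hres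
    refine hres.trans (le_of_eq ?_)
    rcases lt_or_eq_of_le hμ with hμ' | hμ'
    · rw [gronwallBound_of_K_ne_0 (ne_of_gt hμ')]
      simp only [sigma, if_pos hμ']
      ring
    · rw [← hμ', gronwallBound_K0]
      have hs : sigma 0 t = t := by simp [sigma]
      rw [hs]
      simp only [zero_mul, Real.exp_zero, one_mul]
      ring
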